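/- Let K be a projectively faithful lattice polytope in ℝ^n. Then the following are equivalent: (a) K is locally solid; (b) there exists an integer m ≥ n−1 such that mK ∩ ℤ^n = m·(K ∩ ℤ^n); (c) for all but finitely many positive integers m, mK ∩ ℤ^n = m·(K ∩ ℤ^n). -/

import Mathlib

open Pointwise

/-- The set of lattice points (points with integer coordinates) of `ℝ^n`. -/
def latticePoints (n : ℕ) : Set (Fin n → ℝ) := {x | ∀ i, ∃ z : ℤ, x i = (z : ℝ)}

/-- The `k`-fold Minkowski sum `A + A + ⋯ + A` (`k` times) of a subset `A` of `ℝ^n`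
(by convention the `0`-fold sum is `{0}`). -/
def nsmulSet {n : ℕ} : ℕ → Set (Fin n → ℝ) → Set (Fin n → ℝ)
  | 0, _ => {0}
  | k + 1, A => A + nsmulSet k A

/-- A lattice polytope in `ℝ^n`: the convex hull of a finite nonempty set of lattice points. -/
def IsLatticePolytope {n : ℕ} (K : Set (Fin n → ℝ)) : Prop :=
  ∃ S : Set (Fin n → ℝ), S.Finite ∧ S.Nonempty ∧ S ⊆ latticePoints n ∧ K = convexHull ℝ S

/-- A lattice polytope is projectively faithful if the differences of its lattice points
generate the full lattice `ℤ^n` as an abelian group. -/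
def ProjectivelyFaithful {n : ℕ} (K : Set (Fin n → ℝ)) : Prop :=
  (AddSubgroup.closure ((K ∩ latticePoints n) - (K ∩ latticePoints n)) :
    Set (Fin n → ℝ)) = latticePoints n

/-- The lattice cone `C_v = ⋃_{m ≥ 1} m((K - v) ∩ ℤ^n)` at a point `v`, where `m(⬝)` is
the `m`-fold Minkowski sum. -/
def latticeCone {n : ℕ} (K : Set (Fin n → ℝ)) (v : Fin n → ℝ) : Set (Fin n → ℝ) :=
  ⋃ (m : ℕ) (_ : 1 ≤ m), nsmulSet m (((fun x => x - v) '' K) ∩ latticePoints n)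

/-- `C_v` is unperforated: any lattice point with a positive multiple in `C_v` is itself
in `C_v`. -/
def Unperforated {n : ℕ} (C : Set (Fin n → ℝ)) : Prop :=
  ∀ x ∈ latticePoints n, ∀ m : ℕ, 0 < m → (m : ℝ) • x ∈ C → x ∈ C

/-- A lattice polytope is locally solid if the cone `C_v` is unperforated for every
extreme point `v` of `K`. -/
def LocallySolid {n : ℕ} (K : Set (Fin n → ℝ)) : Prop :=
  ∀ v ∈ K.extremePoints ℝ, Unperforated (latticeCone K v)


namespace LS

variable {n : ℕ}

theorem lat_zero : (0 : Fin n → ℝ) ∈ latticePoints n := fun i => ⟨0, by simp⟩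

theorem lat_add {x y : Fin n → ℝ} (hx : x ∈ latticePoints n) (hy : y ∈ latticePoints n) :
    x + y ∈ latticePoints n := by
  intro i
  obtain ⟨a, ha⟩ := hx i; obtain ⟨b, hb⟩ := hy i
  exact ⟨a + b, by simp [ha, hb]⟩

theorem lat_neg {x : Fin n → ℝ} (hx : x ∈ latticePoints n) : -x ∈ latticePoints n := by
  intro i
  obtain ⟨a, ha⟩ := hx i
  exact ⟨-a, by simp [ha]⟩

theorem lat_sub {x y : Fin n → ℝ} (hx : x ∈ latticePoints n) (hy : y ∈ latticePoints n) :
    x - y ∈ latticePoints n := by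
  rw [sub_eq_add_neg]; exact lat_add hx (lat_neg hy)

theorem lat_zsmul {x : Fin n → ℝ} (hx : x ∈ latticePoints n) (c : ℤ) :
    (c : ℝ) • x ∈ latticePoints n := by
  intro i
  obtain ⟨a, ha⟩ := hx i
  exact ⟨c * a, by simp [ha]⟩

theorem lat_nsmul {x : Fin n → ℝ} (hx : x ∈ latticePoints n) (c : ℕ) :
    (c : ℝ) • x ∈ latticePoints n := by
  have := lat_zsmul hx (c : ℤ); simpa using this

theorem lat_sum {ι : Type*} (t : Finset ι) (f : ι → (Fin n → ℝ))
    (hf : ∀ i ∈ t, f i ∈ latticePoints n) : (∑ i ∈ t, f i) ∈ latticePoints n := by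
  classical
  induction t using Finset.induction_on with
  | empty => simpa using lat_zero
  | insert _ _ hni ih =>
    rename_i a s
    rw [Finset.sum_insert hni]
    exact lat_add (hf a (Finset.mem_insert_self a s))
      (ih fun i hi => hf i (Finset.mem_insert_of_mem hi))

/-! nsmulSet lemmas -/

theorem nsmulSet_zero (A : Set (Fin n → ℝ)) : nsmulSet 0 A = {0} := rfl

theorem nsmulSet_succ (k : ℕ) (A : Set (Fin n → ℝ)) :
    nsmulSet (k + 1) A = A + nsmulSet k A := rfl

theorem nsmulSet_one (A : Set (Fin n → ℝ)) : nsmulSet 1 A = A := by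
  rw [nsmulSet_succ, nsmulSet_zero]
  ext x; simp [Set.mem_add]

theorem nsmulSet_add (a b : ℕ) (A : Set (Fin n → ℝ)) :
    nsmulSet (a + b) A = nsmulSet a A + nsmulSet b A := by
  induction a with
  | zero =>
    rw [zero_add, nsmulSet_zero]
    ext x; simp [Set.mem_add]
  | succ a ih =>
    have : a + 1 + b = (a + b) + 1 := by omega
    rw [this, nsmulSet_succ, nsmulSet_succ, ih, add_assoc]

theorem add_mem_nsmulSet {A : Set (Fin n → ℝ)} {a y : Fin n → ℝ} (ha : a ∈ A)
    {k : ℕ} (hy : y ∈ nsmulSet k A) : a + y ∈ nsmulSet (k + 1) A := by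
  rw [nsmulSet_succ]
  exact Set.add_mem_add ha hy

theorem zero_mem_nsmulSet {A : Set (Fin n → ℝ)} (h0 : (0 : Fin n → ℝ) ∈ A) (k : ℕ) :
    (0 : Fin n → ℝ) ∈ nsmulSet k A := by
  induction k with
  | zero => simp [nsmulSet_zero]
  | succ k ih => simpa using add_mem_nsmulSet h0 ih

theorem nsmulSet_mono_count {A : Set (Fin n → ℝ)} (h0 : (0 : Fin n → ℝ) ∈ A) {k l : ℕ}
    (hkl : k ≤ l) : nsmulSet k A ⊆ nsmulSet l A := by
  intro x hx
  have : l = k + (l - k) := by omega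
  rw [this, nsmulSet_add]
  have h0' := zero_mem_nsmulSet h0 (l - k)
  simpa using Set.add_mem_add hx h0'

theorem nsmulSet_mono {A B : Set (Fin n → ℝ)} (hAB : A ⊆ B) (k : ℕ) :
    nsmulSet k A ⊆ nsmulSet k B := by
  induction k with
  | zero => simp [nsmulSet_zero]
  | succ k ih => rw [nsmulSet_succ, nsmulSet_succ]; exact Set.add_subset_add hAB ih

theorem ncomb_mem {A : Set (Fin n → ℝ)} {ι : Type*} (t : Finset ι) (c : ι → ℕ)
    (s : ι → (Fin n → ℝ)) (hs : ∀ i ∈ t, s i ∈ A) :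
    (∑ i ∈ t, (c i : ℝ) • s i) ∈ nsmulSet (∑ i ∈ t, c i) A := by
  classical
  induction t using Finset.induction_on with
  | empty => simp [nsmulSet_zero]
  | insert _ _ hni ih =>
    rename_i a u
    rw [Finset.sum_insert hni, Finset.sum_insert hni]
    have h1 : (c a : ℝ) • s a ∈ nsmulSet (c a) A := by
      have hsa := hs a (Finset.mem_insert_self a u)
      clear ih
      induction c a with
      | zero => simp [nsmulSet_zero]
      | succ d ihd =>
        have : ((d + 1 : ℕ) : ℝ) • s a = s a + (d : ℝ) • s a := by
          push_cast; rw [add_smul, one_smul, add_comm]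
        rw [this]
        exact add_mem_nsmulSet hsa ihd
    have h2 := ih fun i hi => hs i (Finset.mem_insert_of_mem hi)
    rw [nsmulSet_add]
    exact Set.add_mem_add h1 h2

theorem nsmulSet_lat {A : Set (Fin n → ℝ)} (hA : A ⊆ latticePoints n) (k : ℕ) :
    nsmulSet k A ⊆ latticePoints n := by
  induction k with
  | zero => intro x hx; rw [nsmulSet_zero] at hx; simp at hx; exact hx ▸ lat_zero
  | succ k ih =>
    rw [nsmulSet_succ]
    rintro x ⟨a, ha, y, hy, rfl⟩
    exact lat_add (hA ha) (ih hy)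

theorem nsmulSet_subset_smul {A K : Set (Fin n → ℝ)} (hK : Convex ℝ K) (hAK : A ⊆ K)
    {k : ℕ} (hk : 1 ≤ k) : nsmulSet k A ⊆ (k : ℝ) • K := by
  induction k with
  | zero => omega
  | succ k ih =>
    rcases Nat.eq_or_lt_of_le hk with h1 | h2
    · have : k = 0 := by omega
      subst this
      rw [nsmulSet_one]
      intro x hx
      exact ⟨x, hAK hx, by norm_num⟩
    · have hk1 : 1 ≤ k := by omega
      have step : ((k + 1 : ℕ) : ℝ) • K = (1 : ℝ) • K + (k : ℝ) • K := by
        push_cast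
        rw [add_comm (k:ℝ) 1] at *
        exact hK.add_smul (by norm_num) (by positivity)
      rw [nsmulSet_succ, step]
      apply Set.add_subset_add _ (ih hk1)
      intro x hx; exact ⟨x, hAK hx, by norm_num⟩

theorem nsmulSet_translate (v : Fin n → ℝ) (B : Set (Fin n → ℝ)) (k : ℕ) :
    nsmulSet k ((fun x => x - v) '' B) = (fun x => x - (k : ℝ) • v) '' nsmulSet k B := by
  induction k with
  | zero =>
    rw [nsmulSet_zero, nsmulSet_zero]
    ext x; simp
  | succ k ih =>
    rw [nsmulSet_succ, nsmulSet_succ, ih]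
    ext x
    simp only [Set.mem_add, Set.mem_image]
    constructor
    · rintro ⟨a, ⟨b, hb, rfl⟩, y, ⟨z, hz, rfl⟩, rfl⟩
      refine ⟨b + z, Set.add_mem_add hb hz, ?_⟩
      push_cast
      rw [add_smul, one_smul]
      abel
    · rintro ⟨w, hw, rfl⟩
      obtain ⟨b, hb, z, hz, rfl⟩ := hw
      refine ⟨b - v, ⟨b, hb, rfl⟩, z - (k : ℝ) • v, ⟨z, hz, rfl⟩, ?_⟩
      push_cast
      rw [add_smul, one_smul]
      abel

theorem smul_mono_scalar {K : Set (Fin n → ℝ)} (hK : Convex ℝ K) (h0 : (0 : Fin n → ℝ) ∈ K)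
    {s t : ℝ} (hs : 0 ≤ s) (hst : s ≤ t) : s • K ⊆ t • K := by
  rcases eq_or_lt_of_le (hs.trans hst) with h | ht
  · have hs0 : s = 0 := le_antisymm (h ▸ hst) hs
    rw [hs0, ← h]
  · rintro x ⟨y, hy, rfl⟩
    refine ⟨(s / t) • y, hK.smul_mem_of_zero_mem h0 hy ⟨by positivity, by
      rw [div_le_one ht]; exact hst⟩, ?_⟩
    show t • (s / t) • y = s • y
    rw [smul_smul, mul_div_cancel₀]
    exact ne_of_gt ht

end LS

namespace LS2
variable {n : ℕ}

theorem exists_min_deg {K : Set (Fin n → ℝ)} (hKc : IsCompact K)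
    {x : Fin n → ℝ} {N : ℝ} (hN : 0 ≤ N) (hx : x ∈ N • K) :
    ∃ c : ℝ, 0 ≤ c ∧ c ≤ N ∧ x ∈ c • K ∧ ∀ c', 0 ≤ c' → x ∈ c' • K → c ≤ c' := by
  obtain ⟨y₀, hy₀, hxy₀⟩ := hx
  set D : Set (ℝ × (Fin n → ℝ)) := (Set.Icc 0 N) ×ˢ K with hD
  have hDc : IsCompact D := (isCompact_Icc).prod hKc
  set C : Set (ℝ × (Fin n → ℝ)) := D ∩ {p | p.1 • p.2 = x} with hC
  have hCc : IsCompact C := by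
    apply hDc.inter_right
    have : Continuous fun p : ℝ × (Fin n → ℝ) => p.1 • p.2 :=
      continuous_fst.smul continuous_snd
    exact isClosed_eq this continuous_const
  have hCne : C.Nonempty := ⟨(N, y₀), ⟨⟨hN, le_refl N⟩, hy₀⟩, hxy₀⟩
  obtain ⟨p₀, hp₀, hmin⟩ := hCc.exists_isMinOn hCne (continuous_fst.continuousOn)
  refine ⟨p₀.1, hp₀.1.1.1, hp₀.1.1.2, ⟨p₀.2, hp₀.1.2, hp₀.2⟩, ?_⟩
  intro c' hc' hxc'
  rcases le_or_gt c' N with h | h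
  · obtain ⟨y, hy, hxy⟩ := hxc'
    exact hmin (a := (c', y)) ⟨⟨⟨hc', h⟩, hy⟩, hxy⟩
  · exact le_trans hp₀.1.1.2 h.le

theorem mem_smul_hull_of_comb {S' : Set (Fin n → ℝ)} (t : Finset (Fin n → ℝ))
    (htS : ↑t ⊆ S') (μ : (Fin n → ℝ) → ℝ) (hpos : ∀ u ∈ t, 0 ≤ μ u)
    {x : Fin n → ℝ} (hx : ∑ u ∈ t, μ u • u = x) {c : ℝ} (hc : ∑ u ∈ t, μ u = c)
    (hcpos : 0 < c) : x ∈ c • (convexHull ℝ S') := by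
  rw [Set.mem_smul_set]
  refine ⟨∑ u ∈ t, (μ u / c) • u, ?_, ?_⟩
  · apply (convex_convexHull ℝ S').sum_mem
    · intro u hu; exact div_nonneg (hpos u hu) hcpos.le
    · rw [← Finset.sum_div, hc, div_self (ne_of_gt hcpos)]
    · intro u hu; exact subset_convexHull ℝ S' (htS hu)
  · rw [Finset.smul_sum, ← hx]
    apply Finset.sum_congr rfl
    intro u hu
    rw [smul_smul, mul_div_cancel₀]
    exact ne_of_gt hcpos

theorem rep {S' : Set (Fin n → ℝ)} {x : Fin n → ℝ} {c : ℝ}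
    (hx0 : x ≠ 0) (hc : 0 < c) (hmem : x ∈ c • (convexHull ℝ S'))
    (hmin : ∀ c', 0 ≤ c' → c' < c → x ∉ c' • (convexHull ℝ S')) :
    ∃ t : Finset (Fin n → ℝ), ↑t ⊆ S' ∧
      LinearIndependent ℝ ((↑) : t → (Fin n → ℝ)) ∧
      ∃ μ : (Fin n → ℝ) → ℝ, (∀ u ∈ t, 0 < μ u) ∧ (∑ u ∈ t, μ u = c) ∧
        (∑ u ∈ t, μ u • u = x) := by
  classical
  rw [Set.mem_smul_set] at hmem
  obtain ⟨y, hy, hxy⟩ := hmem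
  rw [convexHull_eq_union] at hy
  simp only [Set.mem_iUnion] at hy
  obtain ⟨t₀, ht₀S, haff, hy⟩ := hy
  rw [Finset.mem_convexHull] at hy
  obtain ⟨w, hw0, hw1, hwy⟩ := hy
  rw [Finset.centerMass_eq_of_sum_1 _ _ hw1] at hwy
  simp only [id] at hwy
  set t : Finset (Fin n → ℝ) := t₀.filter (fun u => 0 < w u) with ht
  have htt₀ : t ⊆ t₀ := Finset.filter_subset _ _
  have htS : ↑t ⊆ S' := fun u hu => ht₀S (htt₀ hu)
  have hsum_w : ∑ u ∈ t, w u = 1 := by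
    rw [← hw1]
    apply Finset.sum_filter_of_ne
    intro u hu hne
    exact lt_of_le_of_ne (hw0 u hu) (Ne.symm hne)
  have hsum_wu : ∑ u ∈ t, w u • u = y := by
    rw [← hwy]
    apply Finset.sum_filter_of_ne
    intro u hu hne
    rcases eq_or_lt_of_le (hw0 u hu) with h | h
    · exfalso; apply hne; rw [← h, zero_smul]
    · exact h
  set μ : (Fin n → ℝ) → ℝ := fun u => c * w u with hμ
  have hμpos : ∀ u ∈ t, 0 < μ u := by
    intro u hu
    have := (Finset.mem_filter.mp hu).2
    exact mul_pos hc this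
  have hμsum : ∑ u ∈ t, μ u = c := by
    simp only [hμ]
    rw [← Finset.mul_sum, hsum_w, mul_one]
  have hμx : ∑ u ∈ t, μ u • u = x := by
    have : ∑ u ∈ t, μ u • u = c • ∑ u ∈ t, w u • u := by
      rw [Finset.smul_sum]
      apply Finset.sum_congr rfl
      intro u hu
      simp only [hμ]
      rw [smul_smul]
    rw [this, hsum_wu, ← hxy]
  have push : ∀ b : (Fin n → ℝ) → ℝ, (∑ u ∈ t, b u • u = 0) → 0 < ∑ u ∈ t, b u → False := by
    intro b hb hγ
    set F : Finset (Fin n → ℝ) := t.filter (fun u => 0 < b u) with hF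
    have hFne : F.Nonempty := by
      by_contra hFe
      rw [Finset.not_nonempty_iff_eq_empty] at hFe
      have hble : ∀ u ∈ t, b u ≤ 0 := by
        intro u hu
        by_contra hbu
        push_neg at hbu
        have : u ∈ F := Finset.mem_filter.mpr ⟨hu, hbu⟩
        rw [hFe] at this; exact absurd this (Finset.notMem_empty u)
      have : ∑ u ∈ t, b u ≤ 0 := Finset.sum_nonpos hble
      linarith
    obtain ⟨u₀, hu₀F, hu₀min⟩ := F.exists_min_image (fun u => μ u / b u) hFne
    have hu₀t : u₀ ∈ t := (Finset.mem_filter.mp hu₀F).1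
    have hbu₀ : 0 < b u₀ := (Finset.mem_filter.mp hu₀F).2
    set ε : ℝ := μ u₀ / b u₀ with hε
    have hεpos : 0 < ε := div_pos (hμpos u₀ hu₀t) hbu₀
    set μ' : (Fin n → ℝ) → ℝ := fun u => μ u - ε * b u with hμ'
    have hμ'nonneg : ∀ u ∈ t, 0 ≤ μ' u := by
      intro u hu
      rcases le_or_gt (b u) 0 with h | h
      · have h1 : ε * b u ≤ 0 := mul_nonpos_of_nonneg_of_nonpos hεpos.le h
        have h2 := hμpos u hu
        simp only [hμ', sub_nonneg]
        linarith
      · have huF : u ∈ F := Finset.mem_filter.mpr ⟨hu, h⟩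
        have hmin' := hu₀min u huF
        simp only [hμ', sub_nonneg]
        calc ε * b u ≤ (μ u / b u) * b u := mul_le_mul_of_nonneg_right hmin' h.le
          _ = μ u := by field_simp
    have hμ'sum : ∑ u ∈ t, μ' u = c - ε * (∑ u ∈ t, b u) := by
      simp only [hμ']
      rw [Finset.sum_sub_distrib, hμsum, Finset.mul_sum]
    have hμ'x : ∑ u ∈ t, μ' u • u = x := by
      have expand : ∀ u ∈ t, μ' u • u = μ u • u - ε • (b u • u) := by
        intro u _
        simp only [hμ', sub_smul, mul_smul]
      rw [Finset.sum_congr rfl expand, Finset.sum_sub_distrib, hμx, ← Finset.smul_sum,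
        hb, smul_zero, sub_zero]
    have hc''lt : c - ε * (∑ u ∈ t, b u) < c := by
      have : 0 < ε * (∑ u ∈ t, b u) := mul_pos hεpos hγ
      linarith
    have hc''nonneg : 0 ≤ c - ε * (∑ u ∈ t, b u) := by
      rw [← hμ'sum]
      exact Finset.sum_nonneg hμ'nonneg
    rcases eq_or_lt_of_le hc''nonneg with h0 | hpos'
    · have hsz : ∑ u ∈ t, μ' u = 0 := by rw [hμ'sum]; linarith
      have hall : ∀ u ∈ t, μ' u = 0 :=
        (Finset.sum_eq_zero_iff_of_nonneg hμ'nonneg).mp hsz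
      have : x = 0 := by
        rw [← hμ'x]
        apply Finset.sum_eq_zero
        intro u hu
        rw [hall u hu, zero_smul]
      exact hx0 this
    · exact hmin _ hc''nonneg hc''lt
        (mem_smul_hull_of_comb t htS μ' hμ'nonneg hμ'x hμ'sum hpos')
  have hli : LinearIndependent ℝ ((↑) : t → (Fin n → ℝ)) := by
    rw [Fintype.linearIndependent_iff]
    intro g hg
    set b : (Fin n → ℝ) → ℝ := fun u => if h : u ∈ t then g ⟨u, h⟩ else 0 with hbdef
    have hgb : ∀ i : t, g i = b ↑i := by
      intro i
      simp only [hbdef, dif_pos i.2]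
    have hbt : ∑ u ∈ t, b u • u = 0 := by
      rw [← Finset.sum_coe_sort t (fun u => b u • u)]
      rw [← hg]
      apply Finset.sum_congr rfl
      intro i _
      rw [hgb i]
    have hγ0 : ∑ u ∈ t, b u = 0 := by
      by_contra hne
      rcases lt_or_gt_of_ne hne with hlt | hgt
      · apply push (fun u => - b u)
        · rw [← neg_zero, ← hbt, ← Finset.sum_neg_distrib]
          apply Finset.sum_congr rfl
          intro u _
          rw [neg_smul]
        · rw [Finset.sum_neg_distrib]
          linarith
      · exact push b hbt hgt
    have hb₀ : ∀ u ∈ t₀, b u = 0 := by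
      have h1 : ∑ u ∈ t₀, b u = 0 := by
        rw [← hγ0]
        symm
        apply Finset.sum_subset htt₀
        intro u _ hut
        simp only [hbdef, dif_neg hut]
      have h2 : ∑ u ∈ t₀, b u • u = 0 := by
        rw [← hbt]
        symm
        apply Finset.sum_subset htt₀
        intro u _ hut
        simp only [hbdef, dif_neg hut, zero_smul]
      have key := affineIndependent_iff.mp haff Finset.univ (fun i => b ↑i)
        (by rw [Finset.sum_coe_sort t₀ b]; exact h1)
        (by rw [Finset.sum_coe_sort t₀ (fun u => b u • u)]; exact h2)
      intro u hu
      have := key ⟨u, hu⟩ (Finset.mem_univ _)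
      exact this
    intro i
    rw [hgb i]
    exact hb₀ ↑i (htt₀ i.2)
  exact ⟨t, htS, hli, μ, hμpos, hμsum, hμx⟩
end LS2

namespace LS3
variable {n : ℕ}

theorem rat_coords {ι : Type*} [Fintype ι] [DecidableEq ι] (u : ι → (Fin n → ℝ))
    (uz : ι → Fin n → ℤ) (huz : ∀ i j, u i j = (uz i j : ℝ))
    (hli : LinearIndependent ℝ u) (μ : ι → ℝ)
    (xz : Fin n → ℤ) (hx : ∑ i, μ i • u i = fun j => (xz j : ℝ)) :
    ∀ i, ∃ q : ℚ, μ i = (q : ℝ) := by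
  classical
  set Gz : Matrix ι ι ℤ := Matrix.of (fun a b => ∑ j, uz a j * uz b j) with hGz
  set GR : Matrix ι ι ℝ := Gz.map (Int.cast : ℤ → ℝ) with hGR
  set Gq : Matrix ι ι ℚ := Gz.map (Int.cast : ℤ → ℚ) with hGq
  have hGRentry : ∀ a b, GR a b = ∑ j, u a j * u b j := by
    intro a b
    simp only [hGR, hGz, Matrix.map_apply, Matrix.of_apply]
    push_cast
    simp [huz]
  have quad : ∀ δ : ι → ℝ, GR.mulVec δ = 0 → ∑ b, δ b • u b = 0 := by
    intro δ hδ
    set w : Fin n → ℝ := ∑ b, δ b • u b with hw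
    have hwj : ∀ j, w j = ∑ b, δ b * u b j := by
      intro j
      simp [hw, Finset.sum_apply]
    have hsq : ∑ j, w j * w j = 0 := by
      have key : ∀ a, ∑ j, δ a * (u a j * w j) = δ a * (GR.mulVec δ) a := by
        intro a
        have h2 : ∑ j, u a j * w j = ∑ b, GR a b * δ b := by
          calc ∑ j, u a j * w j = ∑ j, ∑ b, u a j * (δ b * u b j) := by
                apply Finset.sum_congr rfl
                intro j _
                rw [hwj j, Finset.mul_sum]
            _ = ∑ b, ∑ j, u a j * (δ b * u b j) := Finset.sum_comm
            _ = ∑ b, GR a b * δ b := by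
                apply Finset.sum_congr rfl
                intro b _
                rw [hGRentry a b, Finset.sum_mul]
                apply Finset.sum_congr rfl
                intro j _; ring
        rw [← Finset.mul_sum, h2]
        simp [Matrix.mulVec, dotProduct]
      have expand : ∑ j, w j * w j = ∑ a, δ a * (GR.mulVec δ) a := by
        have h1 : ∀ j, w j * w j = ∑ a, δ a * (u a j * w j) := by
          intro j
          conv_lhs => rw [hwj j]
          rw [Finset.sum_mul]
          apply Finset.sum_congr rfl
          intro a _
          rw [hwj j]
          ring
        rw [Finset.sum_congr rfl fun j _ => h1 j, Finset.sum_comm]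
        exact Finset.sum_congr rfl fun a _ => key a
      rw [expand, hδ]
      simp
    have hwz : ∀ j, w j = 0 := by
      intro j
      have hnn : ∀ j ∈ Finset.univ (α := Fin n), 0 ≤ w j * w j := fun j _ => mul_self_nonneg _
      have := (Finset.sum_eq_zero_iff_of_nonneg hnn).mp hsq j (Finset.mem_univ j)
      nlinarith [this]
    funext j
    exact hwz j
  have hdet : Gq.det ≠ 0 := by
    intro h0
    obtain ⟨v, hv0, hvK⟩ := (Matrix.exists_mulVec_eq_zero_iff).mpr h0
    set vr : ι → ℝ := fun i => ((v i : ℚ) : ℝ) with hvrdef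
    have hvr : GR.mulVec vr = 0 := by
      funext a
      have h1 := congrFun hvK a
      simp only [Matrix.mulVec, dotProduct, hGq, Matrix.map_apply, Pi.zero_apply] at h1
      have h2 : ((∑ b, (Gz a b : ℚ) * v b : ℚ) : ℝ) = 0 := by rw [h1]; simp
      push_cast at h2
      simp only [Matrix.mulVec, dotProduct, hGR, Matrix.map_apply, Pi.zero_apply]
      exact h2
    have hcomb := quad vr hvr
    have hvr0 : ∀ i, vr i = 0 := Fintype.linearIndependent_iff.mp hli vr hcomb
    apply hv0
    funext i
    have := hvr0 i
    simp only [hvrdef] at this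
    exact_mod_cast this
  have hGqunit : IsUnit Gq.det := isUnit_iff_ne_zero.mpr hdet
  set rhsz : ι → ℤ := fun a => ∑ j, uz a j * xz j with hrhsz
  set μq : ι → ℚ := Gq⁻¹.mulVec (fun a => (rhsz a : ℚ)) with hμq
  have hsol : Gq.mulVec μq = fun a => (rhsz a : ℚ) := by
    rw [hμq, Matrix.mulVec_mulVec, Matrix.mul_nonsing_inv _ hGqunit, Matrix.one_mulVec]
  have hxj : ∀ j, ∑ b, μ b * u b j = (xz j : ℝ) := by
    intro j
    have := congrFun hx j
    simpa [Finset.sum_apply] using this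
  have hμsys : GR.mulVec μ = fun a => (rhsz a : ℝ) := by
    funext a
    simp only [Matrix.mulVec, dotProduct]
    calc ∑ b, GR a b * μ b = ∑ b, ∑ j, (u a j * u b j) * μ b := by
          apply Finset.sum_congr rfl
          intro b _
          rw [hGRentry a b, Finset.sum_mul]
      _ = ∑ j, ∑ b, (u a j * u b j) * μ b := Finset.sum_comm
      _ = ∑ j, u a j * (xz j : ℝ) := by
          apply Finset.sum_congr rfl
          intro j _
          rw [← hxj j, Finset.mul_sum]
          apply Finset.sum_congr rfl
          intro b _; ring
      _ = (rhsz a : ℝ) := by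
          simp only [hrhsz]
          push_cast
          apply Finset.sum_congr rfl
          intro j _
          rw [huz a j]
  have hμqsysR : GR.mulVec (fun i => ((μq i : ℚ) : ℝ)) = fun a => (rhsz a : ℝ) := by
    funext a
    have h1 := congrFun hsol a
    simp only [Matrix.mulVec, dotProduct, hGq, Matrix.map_apply] at h1
    have h2 : ((∑ b, (Gz a b : ℚ) * μq b : ℚ) : ℝ) = ((rhsz a : ℚ) : ℝ) := by rw [h1]
    push_cast at h2
    simp only [Matrix.mulVec, dotProduct, hGR, Matrix.map_apply]
    exact_mod_cast h2
  have hδ : GR.mulVec (μ - fun i => ((μq i : ℚ) : ℝ)) = 0 := by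
    rw [Matrix.mulVec_sub, hμsys, hμqsysR]
    simp
  have hcomb := quad _ hδ
  have hzero : ∀ i, (μ - fun i => ((μq i : ℚ) : ℝ)) i = 0 :=
    Fintype.linearIndependent_iff.mp hli _ hcomb
  intro i
  refine ⟨μq i, ?_⟩
  have := hzero i
  simp only [Pi.sub_apply] at this
  linarith
end LS3

namespace LS4

theorem fract_step (a b : ℝ) (hb0 : 0 ≤ b) (hb1 : b < 1) :
    Int.fract (a + b) = Int.fract a + b ∨ Int.fract (a + b) = Int.fract a + b - 1 := by
  have hsplit : a + b = (⌊a⌋ : ℝ) + (Int.fract a + b) := by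
    rw [← add_assoc, Int.floor_add_fract]
  rw [hsplit, Int.fract_intCast_add]
  rcases lt_or_ge (Int.fract a + b) 1 with h | h
  · left
    exact Int.fract_eq_self.mpr ⟨add_nonneg (Int.fract_nonneg a) hb0, h⟩
  · right
    have h2 : Int.fract (Int.fract a + b) = Int.fract (Int.fract a + b - (1 : ℤ)) := by
      rw [Int.fract_sub_intCast]
    rw [h2]
    push_cast
    apply Int.fract_eq_self.mpr
    constructor
    · linarith
    · have := Int.fract_lt_one a
      linarith

/-- The key pigeonhole lemma on fractional parts. -/
theorem sharp_comb {ι : Type*} [Fintype ι] [DecidableEq ι] (hcard : 2 ≤ Fintype.card ι)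
    (μ : ι → ℝ) (hrat : ∀ i, ∃ q : ℚ, μ i = (q : ℝ))
    (h0 : ∀ i, 0 < μ i) (h1 : ∀ i, μ i < 1)
    (hsum : (Fintype.card ι : ℝ) - 1 < ∑ i, μ i) :
    ∃ T : ℕ, 1 ≤ T ∧ (∀ i, Int.fract ((T : ℝ) * μ i) ≤ μ i) ∧
      (∑ i, Int.fract ((T : ℝ) * μ i) ≤ (Fintype.card ι : ℝ) - 1) ∧
      (∑ i, (μ i - Int.fract ((T : ℝ) * μ i)) ≤ 1) := by
  classical
  set ν : ι → ℝ := fun i => 1 - μ i with hν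
  have hν0 : ∀ i, 0 < ν i := fun i => by simp [hν]; exact h1 i
  have hν1 : ∀ i, ν i < 1 := fun i => by simp only [hν]; have := h0 i; linarith
  have hνsum : ∑ i, ν i = (Fintype.card ι : ℝ) - ∑ i, μ i := by
    simp only [hν]
    rw [Finset.sum_sub_distrib]
    simp [Finset.card_univ]
  have hνsum1 : ∑ i, ν i < 1 := by rw [hνsum]; linarith
  have hνsumpos : 0 ≤ ∑ i, ν i := Finset.sum_nonneg fun i _ => (hν0 i).le
  -- common denominator
  have hkex : ∃ k : ℕ, 1 ≤ k ∧ ∀ i, ∃ z : ℤ, (k : ℝ) * ν i = (z : ℝ) := by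
    obtain ⟨q, hq⟩ := Classical.axiomOfChoice hrat
    refine ⟨∏ i, (q i).den, ?_, ?_⟩
    · apply Nat.one_le_iff_ne_zero.mpr
      apply Finset.prod_ne_zero_iff.mpr
      intro i _
      exact (q i).den_nz
    · intro i
      have hdvd : ((q i).den : ℤ) ∣ (∏ j, (q j).den : ℕ) := by
        exact_mod_cast Int.natCast_dvd_natCast.mpr (Finset.dvd_prod_of_mem _ (Finset.mem_univ i))
      obtain ⟨c, hc⟩ := hdvd
      set k : ℕ := ∏ j, (q j).den with hk
      have hq_mul : ((k : ℚ)) * (q i) = ((q i).num * c : ℤ) := by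
        have : ((k : ℤ) : ℚ) = ((q i).den : ℚ) * (c : ℚ) := by
          exact_mod_cast congrArg (fun z : ℤ => (z : ℚ)) hc
        push_cast at this ⊢
        rw [this]
        have hnum := Rat.mul_den_eq_num (q i)
        calc ((q i).den : ℚ) * c * q i = (q i * (q i).den) * c := by ring
          _ = ((q i).num : ℚ) * c := by rw [hnum]
      refine ⟨(k : ℤ) - (q i).num * c, ?_⟩
      have hμi : μ i = ((q i : ℚ) : ℝ) := hq i
      simp only [hν]
      push_cast
      have : ((k : ℝ)) * ((q i : ℚ) : ℝ) = (((q i).num : ℝ) * (c : ℝ)) := by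
        exact_mod_cast congrArg (fun z : ℚ => (z : ℝ)) hq_mul
      rw [hμi]
      linarith [this]
  obtain ⟨k, hk1, hkint⟩ := hkex
  have hk2 : 2 ≤ k := by
    rcases Nat.lt_or_ge k 2 with h | h
    · exfalso
      have hk1' : k = 1 := by omega
      obtain ⟨i⟩ : Nonempty ι := Fintype.card_pos_iff.mp (by omega)
      obtain ⟨z, hz⟩ := hkint i
      rw [hk1'] at hz
      simp at hz
      have h0' := hν0 i
      have h1' := hν1 i
      rcases Int.lt_or_le z 1 with hz1 | hz1
      · have : (z : ℝ) ≤ 0 := by exact_mod_cast Int.lt_add_one_iff.mp hz1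
        linarith
      · have : (1 : ℝ) ≤ (z : ℝ) := by exact_mod_cast hz1
        linarith
    · exact h
  set S : ℕ → ℝ := fun j => ∑ i, Int.fract ((j : ℝ) * ν i) with hS
  have hS0 : S 0 = 0 := by simp [hS]
  have hfrν : ∀ i, Int.fract (ν i) = ν i :=
    fun i => Int.fract_eq_self.mpr ⟨(hν0 i).le, hν1 i⟩
  have hSk1 : 1 ≤ S (k - 1) := by
    have : ∀ i, Int.fract (((k - 1 : ℕ) : ℝ) * ν i) = 1 - ν i := by
      intro i
      obtain ⟨z, hz⟩ := hkint i
      have hcast : ((k - 1 : ℕ) : ℝ) = (k : ℝ) - 1 := by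
        have : (1 : ℕ) ≤ k := hk1
        push_cast [Nat.cast_sub this]
        ring
      rw [hcast, sub_mul, one_mul, hz]
      rw [show (z : ℝ) - ν i = (z : ℝ) + (- ν i) by ring, Int.fract_intCast_add]
      rw [Int.fract_neg]
      · rw [hfrν i]
      · rw [hfrν i]; exact ne_of_gt (hν0 i)
    have hsumeq : S (k - 1) = (Fintype.card ι : ℝ) - ∑ i, ν i := by
      simp only [hS]
      rw [Finset.sum_congr rfl fun i _ => this i, Finset.sum_sub_distrib]
      simp [Finset.card_univ]
    rw [hsumeq]
    have : (2 : ℝ) ≤ (Fintype.card ι : ℝ) := by exact_mod_cast hcard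
    linarith
  have hex : ∃ j : ℕ, 1 ≤ S j := ⟨k - 1, hSk1⟩
  set T : ℕ := Nat.find hex with hT
  have hST : 1 ≤ S T := Nat.find_spec hex
  have hTmin : ∀ j < T, ¬ (1 ≤ S j) := fun j hj => Nat.find_min hex hj
  have hT1 : 1 ≤ T := by
    rcases Nat.eq_zero_or_pos T with h | h
    · exfalso; have := hST; rw [h, hS0] at this; linarith
    · exact h
  obtain ⟨T', hT'⟩ : ∃ T', T = T' + 1 := ⟨T - 1, by omega⟩
  have hST' : S T' < 1 := by
    have := hTmin T' (by omega)
    linarith [not_le.mp this]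
  -- no wrap at step T
  have allgood : ∀ i, Int.fract ((T : ℝ) * ν i) = Int.fract ((T' : ℝ) * ν i) + ν i := by
    by_contra hbad
    push_neg at hbad
    obtain ⟨i₀, hi₀⟩ := hbad
    have hstep : ∀ i, Int.fract ((T : ℝ) * ν i) = Int.fract ((T' : ℝ) * ν i) + ν i ∨
        Int.fract ((T : ℝ) * ν i) = Int.fract ((T' : ℝ) * ν i) + ν i - 1 := by
      intro i
      have : (T : ℝ) * ν i = (T' : ℝ) * ν i + ν i := by
        rw [hT']; push_cast; ring
      rw [this]
      exact fract_step _ _ (hν0 i).le (hν1 i)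
    have hle : ∀ i, Int.fract ((T : ℝ) * ν i) ≤
        Int.fract ((T' : ℝ) * ν i) + ν i - (if i = i₀ then 1 else 0) := by
      intro i
      rcases hstep i with h | h
      · rcases eq_or_ne i i₀ with rfl | hne
        · exact absurd h hi₀
        · rw [if_neg hne, h]; simp
      · rw [h]
        rcases eq_or_ne i i₀ with rfl | hne
        · rw [if_pos rfl]
        · rw [if_neg hne]; simp
    have hsumle : S T ≤ S T' + (∑ i, ν i) - 1 := by
      have h1 : S T ≤ ∑ i, (Int.fract ((T' : ℝ) * ν i) + ν i - (if i = i₀ then 1 else 0)) :=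
        Finset.sum_le_sum fun i _ => hle i
      have h2 : ∑ i, (Int.fract ((T' : ℝ) * ν i) + ν i - (if i = i₀ then 1 else 0))
          = S T' + (∑ i, ν i) - 1 := by
        rw [Finset.sum_sub_distrib, Finset.sum_add_distrib,
          Finset.sum_ite_eq' Finset.univ i₀ (fun _ => (1:ℝ))]
        simp [hS]
      linarith [h1, le_of_eq h2]
    linarith
  -- conclusions
  have hfr_pos : ∀ i, 0 < Int.fract ((T : ℝ) * ν i) := by
    intro i
    rw [allgood i]
    have := Int.fract_nonneg ((T' : ℝ) * ν i)
    linarith [hν0 i]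
  have hμν : ∀ i, Int.fract ((T : ℝ) * μ i) = 1 - Int.fract ((T : ℝ) * ν i) := by
    intro i
    have hTμ : (T : ℝ) * μ i = ((T : ℤ) : ℝ) + (- ((T : ℝ) * ν i)) := by
      simp only [hν]
      push_cast
      ring
    rw [hTμ, Int.fract_intCast_add, Int.fract_neg (ne_of_gt (hfr_pos i))]
  have hβμ : ∀ i, Int.fract ((T : ℝ) * μ i) ≤ μ i := by
    intro i
    rw [hμν i, allgood i]
    have := Int.fract_nonneg ((T' : ℝ) * ν i)
    simp only [hν]
    linarith
  have hsumβ : ∑ i, Int.fract ((T : ℝ) * μ i) = (Fintype.card ι : ℝ) - S T := by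
    rw [Finset.sum_congr rfl fun i _ => hμν i, Finset.sum_sub_distrib]
    simp [hS, Finset.card_univ]
  have hSTub : S T ≤ S T' + ∑ i, ν i := by
    have : S T = S T' + ∑ i, ν i := by
      simp only [hS]
      rw [Finset.sum_congr rfl fun i _ => allgood i, Finset.sum_add_distrib]
    linarith [le_of_eq this]
  refine ⟨T, hT1, hβμ, ?_, ?_⟩
  · rw [hsumβ]; linarith
  · rw [Finset.sum_sub_distrib, hsumβ]
    have hμsum' : ∑ i, μ i = (Fintype.card ι : ℝ) - ∑ i, ν i := by
      rw [hνsum]; ring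
    rw [hμsum']
    linarith
end LS4

namespace LS5
open LS LS2 LS3 LS4
variable {n : ℕ}

/-- combination with total weight at most `s` lands in `s • C` -/
theorem comb_in_smul {C : Set (Fin n → ℝ)} (hC : Convex ℝ C) (h0C : (0 : Fin n → ℝ) ∈ C)
    {ι : Type*} (t : Finset ι) (pts : ι → (Fin n → ℝ)) (hpts : ∀ i ∈ t, pts i ∈ C)
    (β : ι → ℝ) (hβ0 : ∀ i ∈ t, 0 ≤ β i) {s : ℝ} (hs : 0 < s)
    (hβs : ∑ i ∈ t, β i ≤ s) : (∑ i ∈ t, β i • pts i) ∈ s • C := by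
  rcases eq_or_lt_of_le (Finset.sum_nonneg hβ0) with h0 | hpos
  · have hall : ∀ i ∈ t, β i = 0 := (Finset.sum_eq_zero_iff_of_nonneg hβ0).mp h0.symm
    have : ∑ i ∈ t, β i • pts i = 0 := by
      apply Finset.sum_eq_zero
      intro i hi; rw [hall i hi, zero_smul]
    rw [this, Set.mem_smul_set]
    exact ⟨0, h0C, smul_zero s⟩
  · set σ : ℝ := ∑ i ∈ t, β i with hσ
    have hq : (∑ i ∈ t, (β i / σ) • pts i) ∈ C := by
      apply hC.sum_mem
      · intro i hi; exact div_nonneg (hβ0 i hi) hpos.le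
      · rw [← Finset.sum_div, div_self (ne_of_gt hpos)]
      · exact hpts
    have hp : (σ / s) • (∑ i ∈ t, (β i / σ) • pts i) ∈ C := by
      apply hC.smul_mem_of_zero_mem h0C hq
      constructor
      · positivity
      · rw [div_le_one hs]; exact hβs
    rw [Set.mem_smul_set]
    refine ⟨_, hp, ?_⟩
    rw [smul_smul, Finset.smul_sum]
    rw [← hσ] at *
    have hss : s * (σ / s) = σ := by field_simp
    rw [hss]
    apply Finset.sum_congr rfl
    intro i hi
    rw [smul_smul, mul_div_cancel₀]
    exact ne_of_gt hpos

/-- The main saturation lemma, in vertex coordinates. -/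
theorem main_saturation {S' : Set (Fin n → ℝ)} (hfin : S'.Finite)
    (hlatS : S' ⊆ latticePoints n) (h0S : (0 : Fin n → ℝ) ∈ S')
    {m : ℕ} (hm : n - 1 ≤ m)
    (heq : ((m : ℝ) • (convexHull ℝ S')) ∩ latticePoints n
      = nsmulSet m ((convexHull ℝ S') ∩ latticePoints n)) :
    ∀ N : ℕ, ∀ x : Fin n → ℝ, x ∈ latticePoints n → x ∈ (N : ℝ) • (convexHull ℝ S') →
      x = 0 ∨ ∃ r : ℕ, 1 ≤ r ∧ x ∈ nsmulSet r ((convexHull ℝ S') ∩ latticePoints n) := by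
  classical
  set K' : Set (Fin n → ℝ) := convexHull ℝ S' with hK'
  set A : Set (Fin n → ℝ) := K' ∩ latticePoints n with hA
  have hKconv : Convex ℝ K' := convex_convexHull ℝ S'
  have hKcomp : IsCompact K' := hfin.isCompact_convexHull ℝ
  have h0K : (0 : Fin n → ℝ) ∈ K' := subset_convexHull ℝ S' h0S
  have h0A : (0 : Fin n → ℝ) ∈ A := ⟨h0K, lat_zero⟩
  have hSK : S' ⊆ K' := subset_convexHull ℝ S'
  have hSA : S' ⊆ A := fun u hu => ⟨hSK hu, hlatS hu⟩
  intro N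
  induction N using Nat.strong_induction_on with
  | _ N IH =>
  intro x hxlat hxN
  by_cases hx0 : x = 0
  · left; exact hx0
  right
  obtain ⟨c, hc0, hcN, hxc, hcmin⟩ := exists_min_deg hKcomp (Nat.cast_nonneg N) hxN
  have hcpos : 0 < c := by
    rcases eq_or_lt_of_le hc0 with h | h
    · exfalso
      rw [← h] at hxc
      rw [Set.zero_smul_set ⟨0, h0K⟩] at hxc
      exact hx0 hxc
    · exact h
  set m' : ℕ := max m 1 with hm'
  have hm'1 : 1 ≤ m' := le_max_right m 1
  have heq' : ((m' : ℝ) • K') ∩ latticePoints n = nsmulSet m' A := by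
    rcases Nat.eq_zero_or_pos m with h | h
    · have : m' = 1 := by omega
      rw [this, nsmulSet_one]
      have h1K : (1 : ℝ) • K' = K' := one_smul ℝ K'
      rw [Nat.cast_one, h1K]
    · have : m' = m := by omega
      rw [this]
      exact heq
  by_cases hcm : c ≤ (m' : ℝ)
  · refine ⟨m', hm'1, ?_⟩
    rw [← heq']
    exact ⟨smul_mono_scalar hKconv h0K hc0 hcm hxc, hxlat⟩
  push_neg at hcm
  have hc1 : 1 < c := lt_of_le_of_lt (by exact_mod_cast hm'1) hcm
  have hminrep : ∀ c', 0 ≤ c' → c' < c → x ∉ c' • K' := by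
    intro c' hc' hlt hmem
    exact absurd (hcmin c' hc' hmem) (not_le.mpr hlt)
  obtain ⟨t, htS, hli, μ, hμpos, hμsum, hμx⟩ := rep hx0 hcpos hxc hminrep
  have htne : t.Nonempty := by
    by_contra hte
    rw [Finset.not_nonempty_iff_eq_empty] at hte
    rw [hte, Finset.sum_empty] at hμsum
    linarith
  by_cases hbig : ∃ u ∈ t, 1 ≤ μ u
  · obtain ⟨u₀, hu₀t, hu₀1⟩ := hbig
    set μ' : (Fin n → ℝ) → ℝ := fun u => μ u - (if u = u₀ then 1 else 0) with hμ'
    have hμ'0 : ∀ u ∈ t, 0 ≤ μ' u := by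
      intro u hu
      simp only [hμ']
      rcases eq_or_ne u u₀ with rfl | hne
      · rw [if_pos rfl]; linarith
      · rw [if_neg hne]; have := hμpos u hu; linarith
    have hμ'sum : ∑ u ∈ t, μ' u = c - 1 := by
      simp only [hμ']
      rw [Finset.sum_sub_distrib, hμsum, Finset.sum_ite_eq' t u₀ (fun _ => (1:ℝ)),
        if_pos hu₀t]
    have hμ'x : ∑ u ∈ t, μ' u • u = x - u₀ := by
      simp only [hμ', sub_smul]
      rw [Finset.sum_sub_distrib, hμx]
      congr 1
      have hterm : ∀ u ∈ t, (if u = u₀ then (1:ℝ) else 0) • u = (if u = u₀ then u else 0) := by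
        intro u _
        split <;> simp
      rw [Finset.sum_congr rfl hterm, Finset.sum_ite_eq' t u₀ (fun u => u), if_pos hu₀t]
    have hx'mem : x - u₀ ∈ (c - 1) • K' :=
      mem_smul_hull_of_comb t htS μ' hμ'0 hμ'x hμ'sum (by linarith)
    have hN2 : 2 ≤ N := by
      have : c ≤ (N : ℝ) := hcN
      have : (1 : ℝ) < (N : ℝ) := lt_of_lt_of_le hc1 this
      exact_mod_cast Nat.lt_of_lt_of_le (by exact_mod_cast this) (le_refl N)
    have hx'N : x - u₀ ∈ ((N - 1 : ℕ) : ℝ) • K' := by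
      apply smul_mono_scalar hKconv h0K (by linarith) _ hx'mem
      have : ((N - 1 : ℕ) : ℝ) = (N : ℝ) - 1 := by
        push_cast [Nat.cast_sub (by omega : 1 ≤ N)]; ring
      rw [this]
      linarith
    have hx'lat : x - u₀ ∈ latticePoints n := lat_sub hxlat (hlatS (htS hu₀t))
    have hu₀A : u₀ ∈ A := hSA (htS hu₀t)
    rcases IH (N - 1) (by omega) (x - u₀) hx'lat hx'N with h | ⟨r, hr1, hrmem⟩
    · refine ⟨1, le_refl 1, ?_⟩
      rw [nsmulSet_one]
      have : x = u₀ := by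
        have := sub_eq_zero.mp h
        exact this
      rw [this]; exact hu₀A
    · refine ⟨r + 1, by omega, ?_⟩
      have := add_mem_nsmulSet hu₀A hrmem
      have hxx : u₀ + (x - u₀) = x := by abel
      rwa [hxx] at this
  · -- all coefficients < 1 : the sharp case
    push_neg at hbig
    have hcardgt : c < (t.card : ℝ) := by
      have h1 : ∑ u ∈ t, μ u < ∑ u ∈ t, (1 : ℝ) :=
        Finset.sum_lt_sum_of_nonempty htne (fun u hu => hbig u hu)
      rw [hμsum, Finset.sum_const, nsmul_eq_mul, mul_one] at h1
      exact h1
    have hcardle : t.card ≤ n := by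
      have h1 := hli.fintype_card_le_finrank
      rw [Module.finrank_fintype_fun_eq_card] at h1
      simpa [Fintype.card_coe] using h1
    have hm'n : m' < n := by
      have h1 : (m' : ℝ) < (t.card : ℝ) := lt_trans hcm hcardgt
      have h2 : m' < t.card := by exact_mod_cast h1
      omega
    have hn2 : 2 ≤ n := by omega
    have hmn : m = n - 1 := by omega
    have hcardn : t.card = n := by
      have h1 : (m' : ℝ) < (t.card : ℝ) := lt_trans hcm hcardgt
      have h2 : m' < t.card := by exact_mod_cast h1
      have h3 : m ≤ m' := le_max_left m 1
      omega
    -- rationality of the coefficients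
    have hulat : ∀ i : t, (i : Fin n → ℝ) ∈ latticePoints n := fun i => hlatS (htS i.2)
    have huz : ∀ i : t, ∃ z : Fin n → ℤ, ∀ j, (i : Fin n → ℝ) j = (z j : ℝ) := by
      intro i
      obtain ⟨z, hz⟩ := Classical.axiomOfChoice (hulat i)
      exact ⟨z, hz⟩
    obtain ⟨uz, huzspec⟩ := Classical.axiomOfChoice huz
    obtain ⟨xz, hxzspec⟩ := Classical.axiomOfChoice hxlat
    have hxsum : ∑ i : t, (μ ↑i) • (i : Fin n → ℝ) = fun j => (xz j : ℝ) := by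
      rw [Finset.sum_coe_sort t (fun u => μ u • u), hμx]
      funext j
      exact hxzspec j
    have hratz := rat_coords (fun i : t => (i : Fin n → ℝ)) uz
      (fun i j => huzspec i j) hli (fun i : t => μ ↑i) xz hxsum
    -- apply the combinatorial lemma
    have hcard2 : 2 ≤ Fintype.card t := by
      rw [Fintype.card_coe, hcardn]; exact hn2
    have hμsum' : ∑ i : t, μ ↑i = c := by
      rw [Finset.sum_coe_sort t μ]; exact hμsum
    have hsumgt : (Fintype.card t : ℝ) - 1 < ∑ i : t, μ ↑i := by
      rw [hμsum', Fintype.card_coe, hcardn]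
      have : ((n - 1 : ℕ) : ℝ) = (n : ℝ) - 1 := by
        push_cast [Nat.cast_sub (by omega : 1 ≤ n)]; ring
      have hm'eq : (m' : ℝ) = (n : ℝ) - 1 := by
        have : m' = n - 1 := by omega
        rw [this]; push_cast [Nat.cast_sub (by omega : 1 ≤ n)]; ring
      linarith [hcm, hm'eq ▸ hcm]
    obtain ⟨T, hT1, hβle, hβsum, hγsum⟩ := sharp_comb hcard2 (fun i : t => μ ↑i)
      hratz (fun i => hμpos ↑i i.2) (fun i => hbig ↑i i.2) hsumgt
    set β : t → ℝ := fun i => Int.fract ((T : ℝ) * μ ↑i) with hβ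
    set y : Fin n → ℝ := ∑ i : t, β i • (i : Fin n → ℝ) with hy
    set γ : t → ℝ := fun i => μ ↑i - β i with hγ
    have hβ0 : ∀ i : t, 0 ≤ β i := fun i => Int.fract_nonneg _
    have hγ0 : ∀ i : t, 0 ≤ γ i := fun i => by
      simp only [hγ, sub_nonneg]; exact hβle i
    have hz_eq : x - y = ∑ i : t, γ i • (i : Fin n → ℝ) := by
      simp only [hγ, sub_smul]
      rw [Finset.sum_sub_distrib]
      congr 1
      rw [Finset.sum_coe_sort t (fun u => μ u • u), hμx]
    -- y is a lattice point
    have hylat : y ∈ latticePoints n := by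
      have hyalt : y = (T : ℝ) • x - ∑ i : t, ((⌊(T : ℝ) * μ ↑i⌋ : ℝ)) • (i : Fin n → ℝ) := by
        simp only [hy, hβ, Int.fract]
        rw [← hμx, ← Finset.sum_coe_sort t (fun u => μ u • u), Finset.smul_sum,
          ← Finset.sum_sub_distrib]
        apply Finset.sum_congr rfl
        intro i _
        rw [smul_smul, ← sub_smul]
      rw [hyalt]
      apply lat_sub (lat_nsmul hxlat T)
      apply lat_sum
      intro i _
      exact lat_zsmul (hulat i) _
    have hxylat : x - y ∈ latticePoints n := lat_sub hxlat hylat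
    -- y ∈ m•K' ∩ lat = nsmulSet m A
    have hymem : y ∈ ((m : ℝ) • K') := by
      have hmpos : (0 : ℝ) < (m : ℝ) := by
        have : 1 ≤ m := by omega
        exact_mod_cast this
      apply comb_in_smul hKconv h0K Finset.univ (fun i : t => (i : Fin n → ℝ))
        (fun i _ => hSK (htS i.2)) β (fun i _ => hβ0 i) hmpos
      have : (m : ℝ) = (Fintype.card t : ℝ) - 1 := by
        rw [Fintype.card_coe, hcardn, hmn]
        push_cast [Nat.cast_sub (by omega : 1 ≤ n)]; ring
      rw [this]
      exact hβsum
    have hyA : y ∈ nsmulSet m A := by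
      rw [← heq]; exact ⟨hymem, hylat⟩
    -- z = x - y ∈ K' ∩ lat = A
    have hzmem : x - y ∈ (1 : ℝ) • K' := by
      rw [hz_eq]
      apply comb_in_smul hKconv h0K Finset.univ (fun i : t => (i : Fin n → ℝ))
        (fun i _ => hSK (htS i.2)) γ (fun i _ => hγ0 i) one_pos
      exact hγsum
    have hzA : x - y ∈ A := by
      rw [one_smul] at hzmem
      exact ⟨hzmem, hxylat⟩
    refine ⟨m + 1, by omega, ?_⟩
    have hcomb : (x - y) + y ∈ nsmulSet (m + 1) A := add_mem_nsmulSet hzA hyA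
    have : (x - y) + y = x := by abel
    rwa [this] at hcomb
end LS5

namespace LS6
open LS LS2 LS3 LS4 LS5
variable {n : ℕ}

/-- lattice points in a bounded set are finite -/
theorem lat_finite {B : Set (Fin n → ℝ)} (hB : IsCompact B) :
    (B ∩ latticePoints n).Finite := by
  classical
  rcases B.eq_empty_or_nonempty with rfl | hne
  · simp
  obtain ⟨x₀, hx₀, hmax⟩ := hB.exists_isMaxOn hne (continuous_norm.continuousOn)
  set C : ℝ := ‖x₀‖ with hCdef
  have hC : ∀ x ∈ B, ‖x‖ ≤ C := fun x hx => hmax hx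
  set M : ℤ := ⌈C⌉ with hM
  set F : (Fin n → ℝ) → (Fin n → ℤ) := fun x i => ⌊x i⌋ with hF
  have hinj : Set.InjOn F (B ∩ latticePoints n) := by
    intro x hx y hy hxy
    funext i
    obtain ⟨a, ha⟩ := hx.2 i
    obtain ⟨b, hb⟩ := hy.2 i
    have hxa : F x i = a := by simp [hF, ha]
    have hyb : F y i = b := by simp [hF, hb]
    rw [ha, hb]
    have : F x i = F y i := congrFun hxy i
    rw [hxa, hyb] at this
    exact_mod_cast this
  have himg : F '' (B ∩ latticePoints n) ⊆ Set.pi Set.univ (fun _ : Fin n => Set.Icc (-M) M) := by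
    rintro z ⟨x, hx, rfl⟩
    intro i _
    have h1 : ‖x i‖ ≤ C := le_trans (norm_le_pi_norm x i) (hC x hx.1)
    obtain ⟨a, ha⟩ := hx.2 i
    have hFa : F x i = a := by simp [hF, ha]
    rw [hFa]
    rw [ha] at h1
    rw [Real.norm_eq_abs] at h1
    have habs : |(a : ℝ)| ≤ (M : ℝ) := le_trans h1 (Int.le_ceil C)
    have : |a| ≤ M := by exact_mod_cast habs
    constructor
    · linarith [abs_le.mp this |>.1]
    · linarith [abs_le.mp this |>.2]
  have hfin : (Set.pi Set.univ (fun _ : Fin n => Set.Icc (-M) M)).Finite :=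
    Set.Finite.pi fun _ => Set.finite_Icc _ _
  exact Set.Finite.of_finite_image (hfin.subset himg) hinj

/-- the easy inclusion -/
theorem easy_subset {S : Set (Fin n → ℝ)} (hS : S.Nonempty) (hlatS : S ⊆ latticePoints n)
    (m : ℕ) : nsmulSet m ((convexHull ℝ S) ∩ latticePoints n)
      ⊆ ((m : ℝ) • (convexHull ℝ S)) ∩ latticePoints n := by
  have hKne : (convexHull ℝ S).Nonempty := hS.mono (subset_convexHull ℝ S)
  rcases Nat.eq_zero_or_pos m with h | h
  · subst h
    rw [nsmulSet_zero]
    intro x hx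
    simp only [Set.mem_singleton_iff] at hx
    subst hx
    constructor
    · rw [Nat.cast_zero, Set.zero_smul_set hKne]; rfl
    · exact lat_zero
  · intro x hx
    constructor
    · exact nsmulSet_subset_smul (convex_convexHull ℝ S) Set.inter_subset_left
        (by omega) hx
    · exact nsmulSet_lat Set.inter_subset_right m hx

/-- translation of a set intersected with lattice points -/
theorem image_sub_inter_lat {B : Set (Fin n → ℝ)} {v : Fin n → ℝ}
    (hv : v ∈ latticePoints n) :
    ((fun x => x - v) '' B) ∩ latticePoints n = (fun x => x - v) '' (B ∩ latticePoints n) := by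
  ext x
  constructor
  · rintro ⟨⟨b, hb, rfl⟩, hlat⟩
    refine ⟨b, ⟨hb, ?_⟩, rfl⟩
    have : b - v + v ∈ latticePoints n := lat_add hlat hv
    simpa using this
  · rintro ⟨b, ⟨hb, hblat⟩, rfl⟩
    exact ⟨⟨b, hb, rfl⟩, lat_sub hblat hv⟩

/-- scaling commutes with translation image -/
theorem smul_image_sub (r : ℝ) (v : Fin n → ℝ) (B : Set (Fin n → ℝ)) :
    r • ((fun x => x - v) '' B) = (fun x => x - r • v) '' (r • B) := by
  ext x
  simp only [Set.mem_smul_set, Set.mem_image]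
  constructor
  · rintro ⟨y, ⟨b, hb, rfl⟩, rfl⟩
    exact ⟨r • b, ⟨b, hb, rfl⟩, by rw [smul_sub]⟩
  · rintro ⟨y, ⟨b, hb, rfl⟩, rfl⟩
    exact ⟨b - v, ⟨b, hb, rfl⟩, by rw [smul_sub]⟩

/-- translation image of convex hull -/
theorem image_sub_convexHull (v : Fin n → ℝ) (S : Set (Fin n → ℝ)) :
    (fun x => x - v) '' (convexHull ℝ S) = convexHull ℝ ((fun x => x - v) '' S) := by
  have hfe : (fun x : Fin n → ℝ => x - v)
      = ⇑((AffineEquiv.constVAdd ℝ (Fin n → ℝ) (-v)).toAffineMap) := by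
    funext x
    show x - v = -v +ᵥ x
    rw [vadd_eq_add, sub_eq_neg_add]
  rw [hfe]
  exact AffineMap.image_convexHull _ _

/-- uniform bound over a finite set of lattice cone members -/
theorem finite_sup {A : Set (Fin n → ℝ)} (h0A : (0 : Fin n → ℝ) ∈ A)
    (F : Finset (Fin n → ℝ))
    (h : ∀ x ∈ F, ∃ k : ℕ, 1 ≤ k ∧ x ∈ nsmulSet k A) :
    ∃ M : ℕ, 1 ≤ M ∧ ∀ x ∈ F, ∀ M' : ℕ, M ≤ M' → x ∈ nsmulSet M' A := by
  classical
  induction F using Finset.induction_on with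
  | empty => exact ⟨1, le_refl 1, fun x hx => absurd hx (Finset.notMem_empty x)⟩
  | @insert a F' haF' ih =>
    obtain ⟨M₁, hM₁1, hM₁⟩ := ih fun x hx => h x (Finset.mem_insert_of_mem hx)
    obtain ⟨k, hk1, hk⟩ := h a (Finset.mem_insert_self a F')
    refine ⟨max M₁ k, le_trans hM₁1 (le_max_left _ _), ?_⟩
    intro x hx M' hM'
    rcases Finset.mem_insert.mp hx with rfl | hx'
    · exact nsmulSet_mono_count h0A (le_trans (le_max_right _ _) hM') hk
    · exact hM₁ x hx' M' (le_trans (le_max_left _ _) hM')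

end LS6

namespace LS7
open LS LS2 LS3 LS4 LS5 LS6
variable {n : ℕ}

theorem cone_eq {S : Set (Fin n → ℝ)} (v : Fin n → ℝ) :
    latticeCone (convexHull ℝ S) v = ⋃ (m : ℕ) (_ : 1 ≤ m),
      nsmulSet m ((convexHull ℝ ((fun x => x - v) '' S)) ∩ latticePoints n) := by
  have h : ((fun x => x - v) '' (convexHull ℝ S)) ∩ latticePoints n
      = (convexHull ℝ ((fun x => x - v) '' S)) ∩ latticePoints n := by
    rw [image_sub_convexHull]
  simp only [latticeCone, h]

theorem b_to_a {K : Set (Fin n → ℝ)} (hK : IsLatticePolytope K) (m : ℕ) (hm : n - 1 ≤ m)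
    (heq : ((m : ℝ) • K) ∩ latticePoints n = nsmulSet m (K ∩ latticePoints n)) :
    LocallySolid K := by
  obtain ⟨S, hSfin, hSne, hSlat, rfl⟩ := hK
  intro v hv
  have hvS : v ∈ S := extremePoints_convexHull_subset hv
  have hvlat : v ∈ latticePoints n := hSlat hvS
  set S' : Set (Fin n → ℝ) := (fun x => x - v) '' S with hS'def
  have hS'fin : S'.Finite := hSfin.image _
  have hS'lat : S' ⊆ latticePoints n := by
    rintro _ ⟨s, hs, rfl⟩
    exact lat_sub (hSlat hs) hvlat
  have h0S' : (0 : Fin n → ℝ) ∈ S' := ⟨v, hvS, sub_self v⟩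
  have hK'conv : Convex ℝ (convexHull ℝ S') := convex_convexHull ℝ S'
  have h0K' : (0 : Fin n → ℝ) ∈ convexHull ℝ S' := subset_convexHull ℝ S' h0S'
  -- translated equality
  have heq' : ((m : ℝ) • convexHull ℝ S') ∩ latticePoints n
      = nsmulSet m ((convexHull ℝ S') ∩ latticePoints n) := by
    rw [hS'def, ← image_sub_convexHull, smul_image_sub,
      image_sub_inter_lat (lat_nsmul hvlat m), heq, image_sub_inter_lat hvlat,
      ← nsmulSet_translate]
  rw [cone_eq v]
  intro x hxlat p hppos hpx
  simp only [Set.mem_iUnion] at hpx ⊢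
  obtain ⟨r, hr1, hmem⟩ := hpx
  have hsub : (p : ℝ) • x ∈ (r : ℝ) • (convexHull ℝ S') :=
    nsmulSet_subset_smul hK'conv Set.inter_subset_left hr1 hmem
  rw [Set.mem_smul_set] at hsub
  obtain ⟨y, hy, hxy⟩ := hsub
  have hppos' : (0 : ℝ) < (p : ℝ) := by exact_mod_cast hppos
  have hxry : x = ((r : ℝ) / (p : ℝ)) • y := by
    have : x = (p : ℝ)⁻¹ • ((p : ℝ) • x) := by
      rw [smul_smul, inv_mul_cancel₀ (ne_of_gt hppos'), one_smul]
    rw [this, ← hxy, smul_smul, div_eq_inv_mul]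
  have hx_small : x ∈ ((r : ℝ) / (p : ℝ)) • (convexHull ℝ S') := by
    rw [Set.mem_smul_set]
    exact ⟨y, hy, hxry.symm⟩
  have hxr : x ∈ (r : ℝ) • (convexHull ℝ S') := by
    refine smul_mono_scalar hK'conv h0K' (by positivity) ?_ hx_small
    exact div_le_self (Nat.cast_nonneg r) (by exact_mod_cast hppos)
  rcases main_saturation hS'fin hS'lat h0S' hm heq' r x hxlat hxr with h0 | ⟨r', hr'1, hmem'⟩
  · refine ⟨1, le_refl 1, ?_⟩
    rw [h0, nsmulSet_one]
    exact ⟨h0K', lat_zero⟩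
  · exact ⟨r', hr'1, hmem'⟩

/-- saturation of the vertex monoid from unperforation -/
theorem sat_v {S' : Set (Fin n → ℝ)} (hfin : S'.Finite) (hlatS : S' ⊆ latticePoints n)
    (h0S : (0 : Fin n → ℝ) ∈ S')
    (hU : Unperforated (⋃ (r : ℕ) (_ : 1 ≤ r),
      nsmulSet r ((convexHull ℝ S') ∩ latticePoints n))) :
    ∀ x ∈ latticePoints n, ∀ N : ℕ, x ∈ (N : ℝ) • (convexHull ℝ S') →
      x = 0 ∨ ∃ r : ℕ, 1 ≤ r ∧ x ∈ nsmulSet r ((convexHull ℝ S') ∩ latticePoints n) := by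
  classical
  intro x hxlat N hxN
  by_cases hx0 : x = 0
  · left; exact hx0
  right
  set K' : Set (Fin n → ℝ) := convexHull ℝ S' with hK'
  have hKconv : Convex ℝ K' := convex_convexHull ℝ S'
  have hKcomp : IsCompact K' := hfin.isCompact_convexHull ℝ
  have h0K : (0 : Fin n → ℝ) ∈ K' := subset_convexHull ℝ S' h0S
  obtain ⟨c, hc0, hcN, hxc, hcmin⟩ := exists_min_deg hKcomp (Nat.cast_nonneg N) hxN
  have hcpos : 0 < c := by
    rcases eq_or_lt_of_le hc0 with h | h
    · exfalso
      rw [← h] at hxc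
      rw [Set.zero_smul_set ⟨0, h0K⟩] at hxc
      exact hx0 hxc
    · exact h
  have hminrep : ∀ c', 0 ≤ c' → c' < c → x ∉ c' • K' := by
    intro c' hc' hlt hmem
    exact absurd (hcmin c' hc' hmem) (not_le.mpr hlt)
  obtain ⟨t, htS, hli, μ, hμpos, hμsum, hμx⟩ := rep hx0 hcpos hxc hminrep
  have htne : t.Nonempty := by
    by_contra hte
    rw [Finset.not_nonempty_iff_eq_empty] at hte
    rw [hte, Finset.sum_empty] at hμsum
    linarith
  -- rationality
  have hulat : ∀ i : t, (i : Fin n → ℝ) ∈ latticePoints n := fun i => hlatS (htS i.2)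
  obtain ⟨uz, huzspec⟩ := Classical.axiomOfChoice
    (fun i : t => Classical.axiomOfChoice (hulat i))
  obtain ⟨xz, hxzspec⟩ := Classical.axiomOfChoice hxlat
  have hxsum : ∑ i : t, (μ ↑i) • (i : Fin n → ℝ) = fun j => (xz j : ℝ) := by
    rw [Finset.sum_coe_sort t (fun u => μ u • u), hμx]
    funext j
    exact hxzspec j
  have hratz := rat_coords (fun i : t => (i : Fin n → ℝ)) uz
    (fun i j => huzspec i j) hli (fun i : t => μ ↑i) xz hxsum
  obtain ⟨q, hq⟩ := Classical.axiomOfChoice hratz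
  -- common denominator
  set p : ℕ := ∏ i : t, (q i).den with hp
  have hp1 : 1 ≤ p := by
    apply Nat.one_le_iff_ne_zero.mpr
    apply Finset.prod_ne_zero_iff.mpr
    intro i _
    exact (q i).den_nz
  have hzint : ∀ i : t, ∃ z : ℤ, ((p : ℝ) * μ ↑i = (z : ℝ)) ∧ 0 < z := by
    intro i
    have hdvd : ((q i).den : ℤ) ∣ (p : ℤ) := by
      exact_mod_cast Int.natCast_dvd_natCast.mpr (Finset.dvd_prod_of_mem _ (Finset.mem_univ i))
    obtain ⟨cc, hcc⟩ := hdvd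
    have hq_mul : ((p : ℚ)) * (q i) = ((q i).num * cc : ℤ) := by
      have hden : ((p : ℤ) : ℚ) = ((q i).den : ℚ) * (cc : ℚ) := by
        exact_mod_cast congrArg (fun z : ℤ => (z : ℚ)) hcc
      push_cast at hden ⊢
      rw [hden]
      have hnum := Rat.mul_den_eq_num (q i)
      calc ((q i).den : ℚ) * cc * q i = (q i * (q i).den) * cc := by ring
        _ = ((q i).num : ℚ) * cc := by rw [hnum]
    refine ⟨(q i).num * cc, ?_, ?_⟩
    · have : ((p : ℝ)) * ((q i : ℚ) : ℝ) = (((q i).num * cc : ℤ) : ℝ) := by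
        exact_mod_cast congrArg (fun z : ℚ => (z : ℝ)) hq_mul
      rw [← hq i] at this
      exact this
    · have hμipos : 0 < μ ↑i := hμpos ↑i i.2
      have hppos : (0 : ℝ) < (p : ℝ) := by exact_mod_cast hp1
      have : (0 : ℝ) < ((q i).num * cc : ℤ) := by
        calc (0:ℝ) < (p : ℝ) * μ ↑i := mul_pos hppos hμipos
          _ = _ := by
            have : ((p : ℝ)) * ((q i : ℚ) : ℝ) = (((q i).num * cc : ℤ) : ℝ) := by
              exact_mod_cast congrArg (fun z : ℚ => (z : ℝ)) hq_mul
            rw [← hq i] at this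
            exact this
      exact_mod_cast this
  obtain ⟨zf, hzf⟩ := Classical.axiomOfChoice hzint
  set cν : t → ℕ := fun i => (zf i).toNat with hcν
  have hcνcast : ∀ i : t, ((cν i : ℕ) : ℝ) = (p : ℝ) * μ ↑i := by
    intro i
    have h1 := (hzf i).1
    have h2 : ((zf i).toNat : ℤ) = zf i := Int.toNat_of_nonneg (hzf i).2.le
    have h3 : (((zf i).toNat : ℕ) : ℝ) = ((zf i : ℤ) : ℝ) := by exact_mod_cast h2
    simp only [hcν]
    rw [h3, ← h1]
  have hpx_comb : (p : ℝ) • x = ∑ i : t, ((cν i : ℕ) : ℝ) • (i : Fin n → ℝ) := by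
    rw [← hμx, ← Finset.sum_coe_sort t (fun u => μ u • u), Finset.smul_sum]
    apply Finset.sum_congr rfl
    intro i _
    rw [smul_smul, hcνcast i]
  have hpx_mem : (p : ℝ) • x ∈ nsmulSet (∑ i : t, cν i) (K' ∩ latticePoints n) := by
    rw [hpx_comb]
    exact ncomb_mem Finset.univ cν (fun i : t => (i : Fin n → ℝ))
      (fun i _ => ⟨subset_convexHull ℝ S' (htS i.2), hulat i⟩)
  have hsumpos : 1 ≤ ∑ i : t, cν i := by
    obtain ⟨i₀, hi₀⟩ := htne
    have : 0 < cν ⟨i₀, hi₀⟩ := by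
      have h2 := (hzf ⟨i₀, hi₀⟩).2
      simp only [hcν]
      omega
    calc 1 ≤ cν ⟨i₀, hi₀⟩ := this
      _ ≤ ∑ i : t, cν i := Finset.single_le_sum (fun i _ => Nat.zero_le _) (Finset.mem_univ _)
  have hx_in_cone := hU x hxlat p hp1 (by
    simp only [Set.mem_iUnion]
    exact ⟨∑ i : t, cν i, hsumpos, hpx_mem⟩)
  simp only [Set.mem_iUnion] at hx_in_cone
  obtain ⟨r, hr1, hr⟩ := hx_in_cone
  exact ⟨r, hr1, hr⟩
end LS7

namespace LS8
open LS LS2 LS3 LS4 LS5 LS6 LS7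
variable {n : ℕ}

theorem finite_sup2 {α : Type*} (G : Finset α) (P : α → ℕ → Prop)
    (hmono : ∀ a ∈ G, ∀ k k' : ℕ, k ≤ k' → P a k → P a k')
    (h : ∀ a ∈ G, ∃ k, P a k) : ∃ M : ℕ, ∀ a ∈ G, P a M := by
  classical
  induction G using Finset.induction_on with
  | empty => exact ⟨0, fun a ha => absurd ha (Finset.notMem_empty a)⟩
  | @insert a G' haG' ih =>
    obtain ⟨M₁, hM₁⟩ := ih (fun b hb k k' hkk' => hmono b (Finset.mem_insert_of_mem hb) k k' hkk')
      (fun b hb => h b (Finset.mem_insert_of_mem hb))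
    obtain ⟨k, hk⟩ := h a (Finset.mem_insert_self a G')
    refine ⟨max M₁ k, ?_⟩
    intro b hb
    rcases Finset.mem_insert.mp hb with rfl | hb'
    · exact hmono b (Finset.mem_insert_self b G') k _ (le_max_right _ _) hk
    · exact hmono b (Finset.mem_insert_of_mem hb') M₁ _ (le_max_left _ _) (hM₁ b hb')

theorem a_to_c {K : Set (Fin n → ℝ)} (hK : IsLatticePolytope K) (hls : LocallySolid K) :
    {m : ℕ | 0 < m ∧ ((m : ℝ) • K) ∩ latticePoints n
      ≠ nsmulSet m (K ∩ latticePoints n)}.Finite := by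
  classical
  obtain ⟨S, hSfin, hSne, hSlat, rfl⟩ := hK
  have hKconv : Convex ℝ (convexHull ℝ S) := convex_convexHull ℝ S
  have hKcomp : IsCompact (convexHull ℝ S) := hSfin.isCompact_convexHull ℝ
  have hKne : (convexHull ℝ S).Nonempty := hSne.mono (subset_convexHull ℝ S)
  set V : Set (Fin n → ℝ) := Set.extremePoints ℝ (convexHull ℝ S) with hV
  have hVS : V ⊆ S := extremePoints_convexHull_subset
  have hVfin : V.Finite := hSfin.subset hVS
  have hVlat : V ⊆ latticePoints n := fun v hv => hSlat (hVS hv)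
  have hVK : V ⊆ convexHull ℝ S := fun v hv => hv.1
  have hKV : convexHull ℝ V = convexHull ℝ S := by
    have h1 := closure_convexHull_extremePoints hKcomp hKconv
    have h2 : IsClosed (convexHull ℝ V) := hVfin.isClosed_convexHull ℝ
    rw [← hV] at h1
    rw [← h1, h2.closure_eq]
  -- the shifted vertex data
  have hS'fin : ∀ v : Fin n → ℝ, ((fun x => x - v) '' S).Finite := fun v => hSfin.image _
  have hS'lat : ∀ v ∈ V, ((fun x => x - v) '' S) ⊆ latticePoints n := by
    rintro v hv _ ⟨s, hs, rfl⟩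
    exact lat_sub (hSlat hs) (hVlat hv)
  have h0S' : ∀ v ∈ V, (0 : Fin n → ℝ) ∈ ((fun x => x - v) '' S) :=
    fun v hv => ⟨v, hVS hv, sub_self v⟩
  have h0A' : ∀ v ∈ V, (0 : Fin n → ℝ) ∈
      ((convexHull ℝ ((fun x => x - v) '' S)) ∩ latticePoints n) :=
    fun v hv => ⟨subset_convexHull ℝ _ (h0S' v hv), lat_zero⟩
  -- the finite set of translated small-dilate lattice points
  set X : (Fin n → ℝ) → Set (Fin n → ℝ) := fun v =>
    ⋃ r ∈ Finset.range (n + 1),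
      ((fun w => w - (r : ℝ) • v) '' (((r : ℝ) • (convexHull ℝ S)) ∩ latticePoints n)) with hX
  have hXfin : ∀ v, (X v).Finite := by
    intro v
    apply Set.Finite.biUnion (Finset.range (n + 1)).finite_toSet
    intro r _
    apply Set.Finite.image
    apply lat_finite
    have : (r : ℝ) • (convexHull ℝ S) = (fun x => (r:ℝ) • x) '' (convexHull ℝ S) := by
      rw [Set.image_smul]
    rw [this]
    exact hKcomp.image (continuous_const_smul _)
  -- every element of X v is in the vertex monoid, with some exponent
  have hXin : ∀ v ∈ V, ∀ x ∈ X v, ∃ k : ℕ, 1 ≤ k ∧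
      x ∈ nsmulSet k ((convexHull ℝ ((fun y => y - v) '' S)) ∩ latticePoints n) := by
    intro v hv x hx
    have hUv : Unperforated (⋃ (r : ℕ) (_ : 1 ≤ r),
        nsmulSet r ((convexHull ℝ ((fun y => y - v) '' S)) ∩ latticePoints n)) := by
      have := hls v hv
      rwa [cone_eq v] at this
    simp only [hX, Set.mem_iUnion, Finset.mem_range] at hx
    obtain ⟨r, hr, w, ⟨hwK, hwlat⟩, rfl⟩ := hx
    have hxlat : w - (r : ℝ) • v ∈ latticePoints n :=
      lat_sub hwlat (lat_nsmul (hVlat hv) r)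
    have hxK : w - (r : ℝ) • v ∈ (n : ℝ) • (convexHull ℝ ((fun y => y - v) '' S)) := by
      rw [Set.mem_smul_set] at hwK
      obtain ⟨y, hy, rfl⟩ := hwK
      have h1 : (r : ℝ) • y - (r : ℝ) • v = (r : ℝ) • (y - v) := by rw [smul_sub]
      have h2 : y - v ∈ convexHull ℝ ((fun x => x - v) '' S) := by
        rw [← image_sub_convexHull]
        exact ⟨y, hy, rfl⟩
      have h3 : (r : ℝ) • y - (r : ℝ) • v ∈ (r : ℝ) • (convexHull ℝ ((fun x => x - v) '' S)) := by
        rw [h1, Set.mem_smul_set]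
        exact ⟨y - v, h2, rfl⟩
      refine smul_mono_scalar (convex_convexHull ℝ _)
        (subset_convexHull ℝ _ (h0S' v hv)) (Nat.cast_nonneg r)
        (by exact_mod_cast Nat.lt_succ_iff.mp hr) h3
    rcases sat_v (hS'fin v) (hS'lat v hv) (h0S' v hv) hUv _ hxlat n hxK with h0 | ⟨k, hk1, hk⟩
    · refine ⟨1, le_refl 1, ?_⟩
      show w - (r : ℝ) • v ∈ nsmulSet 1 ((convexHull ℝ ((fun y => y - v) '' S)) ∩ latticePoints n)
      rw [h0, nsmulSet_one]
      exact h0A' v hv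
    · exact ⟨k, hk1, hk⟩
  -- a uniform exponent
  have hunif : ∃ M₀ : ℕ, ∀ v ∈ hVfin.toFinset, ∀ x ∈ X v,
      x ∈ nsmulSet M₀ ((convexHull ℝ ((fun y => y - v) '' S)) ∩ latticePoints n) := by
    apply finite_sup2 (hVfin.toFinset)
      (fun v M => ∀ x ∈ X v,
        x ∈ nsmulSet M ((convexHull ℝ ((fun y => y - v) '' S)) ∩ latticePoints n))
    · intro v hvf k k' hkk' hP x hx
      have hv : v ∈ V := hVfin.mem_toFinset.mp hvf
      exact nsmulSet_mono_count (h0A' v hv) hkk' (hP x hx)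
    · intro v hvf
      have hv : v ∈ V := hVfin.mem_toFinset.mp hvf
      obtain ⟨M₁, hM₁1, hM₁⟩ := finite_sup (h0A' v hv) (hXfin v).toFinset
        (fun x hx => hXin v hv x ((hXfin v).mem_toFinset.mp hx))
      exact ⟨M₁, fun x hx => hM₁ x ((hXfin v).mem_toFinset.mpr hx) M₁ (le_refl _)⟩
  obtain ⟨M₀, hM₀⟩ := hunif
  set M : ℕ := max (max M₀ n) 1 with hM
  have hMM₀ : M₀ ≤ M := le_trans (le_max_left _ _) (le_max_left _ _)
  have hMn : n ≤ M := le_trans (le_max_right M₀ n) (le_max_left _ _)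
  have hM1 : 1 ≤ M := le_max_right _ _
  have hPM : ∀ v ∈ V, ∀ x ∈ X v,
      x ∈ nsmulSet M ((convexHull ℝ ((fun y => y - v) '' S)) ∩ latticePoints n) := by
    intro v hv x hx
    exact nsmulSet_mono_count (h0A' v hv) hMM₀ (hM₀ v (hVfin.mem_toFinset.mpr hv) x hx)
  -- main covering claim
  have hcover : ∀ m : ℕ, (n + 1) * (M + 1) ≤ m →
      ((m : ℝ) • (convexHull ℝ S)) ∩ latticePoints n
        = nsmulSet m ((convexHull ℝ S) ∩ latticePoints n) := by
    intro m hmB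
    have hm1 : 1 ≤ m := le_trans (by nlinarith [Nat.le_refl 1]) hmB
    apply Set.Subset.antisymm _ (easy_subset hSne hSlat m)
    rintro z ⟨hzK, hzlat⟩
    rw [Set.mem_smul_set] at hzK
    obtain ⟨y, hy, rfl⟩ := hzK
    have hy' : y ∈ convexHull ℝ V := by rw [hKV]; exact hy
    rw [convexHull_eq_union] at hy'
    simp only [Set.mem_iUnion] at hy'
    obtain ⟨t₀, ht₀V, haff, hyt⟩ := hy'
    rw [Finset.mem_convexHull] at hyt
    obtain ⟨w, hw0, hw1, hwy⟩ := hyt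
    rw [Finset.centerMass_eq_of_sum_1 _ _ hw1] at hwy
    simp only [id] at hwy
    have htne : t₀.Nonempty := by
      by_contra hte
      rw [Finset.not_nonempty_iff_eq_empty] at hte
      rw [hte, Finset.sum_empty] at hw1
      norm_num at hw1
    have hcard : t₀.card ≤ n + 1 := by
      have h1 := haff.card_le_finrank_succ
      have h2 : Module.finrank ℝ (vectorSpan ℝ (Set.range (Subtype.val : t₀ → (Fin n → ℝ))))
          ≤ Module.finrank ℝ (Fin n → ℝ) := Submodule.finrank_le _
      rw [Module.finrank_fintype_fun_eq_card, Fintype.card_fin] at h2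
      rw [Fintype.card_coe] at h1
      omega
    set μ : (Fin n → ℝ) → ℝ := fun u => (m : ℝ) * w u with hμ
    have hμ0 : ∀ u ∈ t₀, 0 ≤ μ u := fun u hu =>
      mul_nonneg (Nat.cast_nonneg m) (hw0 u hu)
    have hμsum : ∑ u ∈ t₀, μ u = (m : ℝ) := by
      simp only [hμ]
      rw [← Finset.mul_sum, hw1, mul_one]
    have hμz : ∑ u ∈ t₀, μ u • u = (m : ℝ) • y := by
      rw [← hwy, Finset.smul_sum]
      apply Finset.sum_congr rfl
      intro u _
      simp only [hμ]
      rw [smul_smul]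
    obtain ⟨u₀, hu₀, hall⟩ := t₀.exists_max_image μ htne
    have hu₀V : u₀ ∈ V := ht₀V hu₀
    have hu₀big : (M : ℝ) + 1 ≤ μ u₀ := by
      have h1 : (m : ℝ) ≤ (t₀.card : ℝ) * μ u₀ := by
        rw [← hμsum]
        calc ∑ u ∈ t₀, μ u ≤ ∑ _u ∈ t₀, μ u₀ := Finset.sum_le_sum fun u hu => hall u hu
          _ = (t₀.card : ℝ) * μ u₀ := by rw [Finset.sum_const, nsmul_eq_mul]
      have h2 : ((n : ℝ) + 1) * ((M : ℝ) + 1) ≤ (m : ℝ) := by exact_mod_cast hmB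
      have h3 : (t₀.card : ℝ) ≤ (n : ℝ) + 1 := by exact_mod_cast hcard
      have hμu₀0 : 0 ≤ μ u₀ := hμ0 u₀ hu₀
      nlinarith
    set D : (Fin n → ℝ) → ℕ := fun u => (⌊μ u⌋).toNat with hD
    have hDcast : ∀ u ∈ t₀, ((D u : ℕ) : ℝ) = ((⌊μ u⌋ : ℤ) : ℝ) := by
      intro u hu
      have : ((⌊μ u⌋).toNat : ℤ) = ⌊μ u⌋ := Int.toNat_of_nonneg (Int.floor_nonneg.mpr (hμ0 u hu))
      simp only [hD]
      exact_mod_cast this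
    set sumD : ℕ := ∑ u ∈ t₀, D u with hsumD
    have hsumD_le : sumD ≤ m := by
      have h1 : (sumD : ℝ) ≤ (m : ℝ) := by
        rw [hsumD]
        push_cast
        calc ∑ u ∈ t₀, ((D u : ℕ) : ℝ) = ∑ u ∈ t₀, ((⌊μ u⌋ : ℤ) : ℝ) :=
              Finset.sum_congr rfl fun u hu => hDcast u hu
          _ ≤ ∑ u ∈ t₀, μ u := Finset.sum_le_sum fun u _ => Int.floor_le (μ u)
          _ = (m : ℝ) := hμsum
      exact_mod_cast h1
    set r : ℕ := m - sumD with hr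
    have hr_real : (r : ℝ) = ∑ u ∈ t₀, Int.fract (μ u) := by
      have h1 : (r : ℝ) = (m : ℝ) - (sumD : ℝ) := by
        rw [hr]
        push_cast [Nat.cast_sub hsumD_le]
        ring
      rw [h1, ← hμsum]
      rw [hsumD]
      push_cast
      rw [Finset.sum_congr rfl (fun u hu => hDcast u hu), ← Finset.sum_sub_distrib]
      apply Finset.sum_congr rfl
      intro u _
      rw [Int.fract]
    have hrn : r ≤ n := by
      have h1 : (r : ℝ) < (t₀.card : ℝ) := by
        rw [hr_real]
        calc ∑ u ∈ t₀, Int.fract (μ u) < ∑ _u ∈ t₀, (1 : ℝ) :=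
              Finset.sum_lt_sum_of_nonempty htne fun u _ => Int.fract_lt_one (μ u)
          _ = (t₀.card : ℝ) := by rw [Finset.sum_const, nsmul_eq_mul, mul_one]
      have h2 : r < t₀.card := by exact_mod_cast h1
      omega
    set w' : Fin n → ℝ := (m : ℝ) • y - ∑ u ∈ t₀, ((D u : ℕ) : ℝ) • u with hw'
    have hw'_eq : w' = ∑ u ∈ t₀, Int.fract (μ u) • u := by
      rw [hw', ← hμz, ← Finset.sum_sub_distrib]
      apply Finset.sum_congr rfl
      intro u hu
      rw [← sub_smul, hDcast u hu, Int.fract]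
    have hw'lat : w' ∈ latticePoints n := by
      rw [hw']
      apply lat_sub hzlat
      apply lat_sum
      intro u hu
      exact lat_nsmul (hSlat (hVS (ht₀V hu))) (D u)
    have ht₀KL : ∀ u ∈ t₀, u ∈ (convexHull ℝ S) ∩ latticePoints n := by
      intro u hu
      exact ⟨hVK (ht₀V hu), hVlat (ht₀V hu)⟩
    rcases Nat.eq_zero_or_pos r with hr0 | hrpos
    · -- no fractional part
      have hfr0 : ∀ u ∈ t₀, Int.fract (μ u) = 0 := by
        have hsz : ∑ u ∈ t₀, Int.fract (μ u) = 0 := by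
          rw [← hr_real, hr0]; norm_num
        exact (Finset.sum_eq_zero_iff_of_nonneg fun u _ => Int.fract_nonneg (μ u)).mp hsz
      have hz_eq : (m : ℝ) • y = ∑ u ∈ t₀, ((D u : ℕ) : ℝ) • u := by
        have : w' = 0 := by
          rw [hw'_eq]
          apply Finset.sum_eq_zero
          intro u hu
          rw [hfr0 u hu, zero_smul]
        rw [hw'] at this
        linear_combination (norm := abel) this
      have hsumDm : sumD = m := by omega
      rw [hz_eq, ← hsumDm]
      exact ncomb_mem t₀ D (fun u => u) ht₀KL
    · -- fractional part present : use the vertex monoid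
      have hw'K : w' ∈ ((r : ℝ) • (convexHull ℝ S)) ∩ latticePoints n := by
        constructor
        · apply mem_smul_hull_of_comb t₀ (fun u hu => hVS (ht₀V hu))
            (fun u => Int.fract (μ u)) (fun u _ => Int.fract_nonneg _)
            hw'_eq.symm hr_real.symm
          exact_mod_cast hrpos
        · exact hw'lat
      have hxX : w' - (r : ℝ) • u₀ ∈ X u₀ := by
        simp only [hX, Set.mem_iUnion, Finset.mem_range]
        exact ⟨r, by omega, w', hw'K, rfl⟩
      have hxM := hPM u₀ hu₀V _ hxX
      -- translate back
      have hA'eq : (convexHull ℝ ((fun y => y - u₀) '' S)) ∩ latticePoints n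
          = (fun y => y - u₀) '' ((convexHull ℝ S) ∩ latticePoints n) := by
        rw [← image_sub_convexHull, image_sub_inter_lat (hVlat hu₀V)]
      rw [hA'eq, nsmulSet_translate] at hxM
      obtain ⟨ζ, hζ, hζeq⟩ := hxM
      -- the integer parts redistribution
      have hDu₀ : M ≤ D u₀ := by
        have h1 : (μ u₀) - 1 < ((⌊μ u₀⌋ : ℤ) : ℝ) := Int.sub_one_lt_floor (μ u₀)
        have h2 : (M : ℝ) < ((D u₀ : ℕ) : ℝ) + 1 := by
          rw [hDcast u₀ hu₀]
          linarith
        have := (by exact_mod_cast h2 : (M : ℕ) < D u₀ + 1)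
        omega
    -- arrange counts
      have hrM : r ≤ M := le_trans hrn hMn
      have hMm : M + 1 ≤ m := by
        have : (n+1) * (M+1) ≥ M + 1 := by nlinarith
        omega
      set c' : (Fin n → ℝ) → ℕ := fun u => if u = u₀ then D u - (M - r) else D u with hc'
      have hc'sum : ∑ u ∈ t₀, c' u = m - M := by
        have h1 : ∑ u ∈ t₀, c' u = c' u₀ + ∑ u ∈ t₀.erase u₀, c' u :=
          (Finset.add_sum_erase t₀ c' hu₀).symm
        have h2 : ∑ u ∈ t₀, D u = D u₀ + ∑ u ∈ t₀.erase u₀, D u :=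
          (Finset.add_sum_erase t₀ D hu₀).symm
        have h3 : ∑ u ∈ t₀.erase u₀, c' u = ∑ u ∈ t₀.erase u₀, D u := by
          apply Finset.sum_congr rfl
          intro u hu
          have : u ≠ u₀ := Finset.ne_of_mem_erase hu
          simp only [hc', if_neg this]
        have h4 : c' u₀ = D u₀ - (M - r) := by simp only [hc', if_pos rfl]
        have h5 : M - r ≤ D u₀ := le_trans (Nat.sub_le M r) hDu₀
        have h6 : sumD = m - r := by omega
        rw [h1, h3, h4]
        rw [hsumD] at h6
        omega
      have hP2 : ∑ u ∈ t₀, ((c' u : ℕ) : ℝ) • u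
          ∈ nsmulSet (m - M) ((convexHull ℝ S) ∩ latticePoints n) := by
        rw [← hc'sum]
        exact ncomb_mem t₀ c' (fun u => u) ht₀KL
      -- z = ζ + P2
      have hζval : ζ = w' - (r : ℝ) • u₀ + (M : ℝ) • u₀ := by
        have : ζ - (M : ℝ) • u₀ = w' - (r : ℝ) • u₀ := hζeq
        linear_combination (norm := abel) this
      have hsplit : (m : ℝ) • y = ζ + ∑ u ∈ t₀, ((c' u : ℕ) : ℝ) • u := by
        have hsum_c' : ∑ u ∈ t₀, ((c' u : ℕ) : ℝ) • u
            = (∑ u ∈ t₀, ((D u : ℕ) : ℝ) • u) - (((M - r : ℕ) : ℕ) : ℝ) • u₀ := by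
          have e1 : ∑ u ∈ t₀, ((c' u : ℕ) : ℝ) • u
              = ((c' u₀ : ℕ) : ℝ) • u₀ + ∑ u ∈ t₀.erase u₀, ((c' u : ℕ) : ℝ) • u :=
            (Finset.add_sum_erase t₀ (fun u => ((c' u : ℕ) : ℝ) • u) hu₀).symm
          have e2 : ∑ u ∈ t₀, ((D u : ℕ) : ℝ) • u
              = ((D u₀ : ℕ) : ℝ) • u₀ + ∑ u ∈ t₀.erase u₀, ((D u : ℕ) : ℝ) • u :=
            (Finset.add_sum_erase t₀ (fun u => ((D u : ℕ) : ℝ) • u) hu₀).symm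
          have e3 : ∑ u ∈ t₀.erase u₀, ((c' u : ℕ) : ℝ) • u
              = ∑ u ∈ t₀.erase u₀, ((D u : ℕ) : ℝ) • u := by
            apply Finset.sum_congr rfl
            intro u hu
            have : u ≠ u₀ := Finset.ne_of_mem_erase hu
            simp only [hc', if_neg this]
          have h5 : M - r ≤ D u₀ := le_trans (Nat.sub_le M r) hDu₀
          have e4 : ((c' u₀ : ℕ) : ℝ) = ((D u₀ : ℕ) : ℝ) - ((M - r : ℕ) : ℝ) := by
            simp only [hc', if_pos rfl]
            push_cast [Nat.cast_sub h5]
            ring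
          rw [e1, e3, e2, e4, sub_smul]
          abel
        have hMr_cast : (((M - r : ℕ) : ℕ) : ℝ) = (M : ℝ) - (r : ℝ) := by
          push_cast [Nat.cast_sub hrM]
          ring
        rw [hsum_c', hζval, hMr_cast, hw']
        rw [sub_smul]
        abel
      rw [hsplit]
      have hfinal := Set.add_mem_add hζ hP2
      rw [← nsmulSet_add] at hfinal
      have hMm' : M + (m - M) = m := by omega
      rwa [hMm'] at hfinal
  -- conclude finiteness
  apply Set.Finite.subset (Set.finite_Iio ((n + 1) * (M + 1)))
  intro m hm
  simp only [Set.mem_setOf_eq] at hm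
  simp only [Set.mem_Iio]
  by_contra hge
  push_neg at hge
  exact hm.2 (hcover m hge)

theorem c_to_b {K : Set (Fin n → ℝ)}
    (hc : {m : ℕ | 0 < m ∧ ((m : ℝ) • K) ∩ latticePoints n
      ≠ nsmulSet m (K ∩ latticePoints n)}.Finite) :
    ∃ m : ℕ, n - 1 ≤ m ∧ ((m : ℝ) • K) ∩ latticePoints n
      = nsmulSet m (K ∩ latticePoints n) := by
  classical
  set B : ℕ := hc.toFinset.sup id + n + 1 with hB
  refine ⟨B, by omega, ?_⟩
  have hBnotin : B ∉ {m : ℕ | 0 < m ∧ ((m : ℝ) • K) ∩ latticePoints n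
      ≠ nsmulSet m (K ∩ latticePoints n)} := by
    intro hmem
    have : B ≤ hc.toFinset.sup id := Finset.le_sup (f := id) (hc.mem_toFinset.mpr hmem)
    omega
  simp only [Set.mem_setOf_eq, not_and, not_not] at hBnotin
  exact hBnotin (by omega)

end LS8

/-- Let `K` be a projectively faithful lattice polytope in `ℝ^n`.  The following are
equivalent: (a) `K` is locally solid; (b) `mK ∩ ℤ^n = m(K ∩ ℤ^n)` for some integer
`m ≥ n - 1`; (c) `mK ∩ ℤ^n = m(K ∩ ℤ^n)` for all but finitely many positive
integers `m`. -/
theorem locallySolid_tfae (n : ℕ) (K : Set (Fin n → ℝ))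
    (hK : IsLatticePolytope K) (hpf : ProjectivelyFaithful K) :
    (LocallySolid K ↔
      ∃ m : ℕ, n - 1 ≤ m ∧
        ((m : ℝ) • K) ∩ latticePoints n = nsmulSet m (K ∩ latticePoints n)) ∧
    (LocallySolid K ↔
      {m : ℕ | 0 < m ∧
        ((m : ℝ) • K) ∩ latticePoints n ≠ nsmulSet m (K ∩ latticePoints n)}.Finite) := by
  constructor
  · constructor
    · intro ha
      exact LS8.c_to_b (LS8.a_to_c hK ha)
    · rintro ⟨m, hm, he⟩
      exact LS7.b_to_a hK m hm he
  · constructor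
    · intro ha
      exact LS8.a_to_c hK ha
    · intro hc
      obtain ⟨m, hm, he⟩ := LS8.c_to_b hc
      exact LS7.b_to_a hK m hm he
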